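/- Let M = I − Δ be an r × r real matrix where r ≥ 4 and every entry of Δ has absolute value at most 1/r². Let y be a vector with all entries in {1/4, 3/4}. Then M is invertible and the vector x = M^{-1} y has all entries in the interval [0, 1]. -/

import Mathlib

attribute [local instance] Matrix.linftyOpNormedRing

theorem inverse_preserves_unit_interval (r : ℕ) (hr : 4 ≤ r)
    (Δ : Matrix (Fin r) (Fin r) ℝ)
    (hΔ : ∀ j k, |Δ j k| ≤ 1 / (r : ℝ) ^ 2)
    (y : Fin r → ℝ) (hy : ∀ j, y j = 1 / 4 ∨ y j = 3 / 4) :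
    IsUnit (1 - Δ) ∧
      ∀ j, 0 ≤ ((1 - Δ)⁻¹.mulVec y) j ∧ ((1 - Δ)⁻¹.mulVec y) j ≤ 1 := by
  have hrpos : (0:ℝ) < r := by positivity
  have hr4 : (4:ℝ) ≤ r := by exact_mod_cast hr
  -- norm bound on Δ
  have hΔnorm : ‖Δ‖ ≤ 1 / r := by
    rw [Matrix.linfty_opNorm_def]
    have h1 : ((⟨1 / r, by positivity⟩ : NNReal) : ℝ) = 1 / r := rfl
    rw [← h1]
    apply NNReal.coe_le_coe.mpr
    apply Finset.sup_le
    intro i _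
    refine NNReal.coe_le_coe.mp ?_; rw [NNReal.coe_sum]
    calc ∑ j, (‖Δ i j‖₊ : ℝ) = ∑ j, |Δ i j| := by simp [Real.norm_eq_abs]
      _ ≤ ∑ _j : Fin r, 1 / (r:ℝ)^2 := Finset.sum_le_sum fun j _ => hΔ i j
      _ = r * (1 / (r:ℝ)^2) := by simp [Finset.sum_const, mul_comm]
      _ = 1 / r := by field_simp
  have hΔlt : ‖Δ‖ < 1 := lt_of_le_of_lt hΔnorm (by rw [div_lt_one hrpos]; linarith)
  have hcs : CompleteSpace (Matrix (Fin r) (Fin r) ℝ) := by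
    exact (inferInstance : CompleteSpace (Fin r → Fin r → ℝ))
  haveI : HasSummableGeomSeries (Matrix (Fin r) (Fin r) ℝ) :=
    @instHasSummableGeomSeriesOfCompleteSpace _ _ hcs
  have hU : IsUnit (1 - Δ) := (Units.oneSub Δ hΔlt).isUnit
  refine ⟨hU, ?_⟩
  set B := (1 - Δ)⁻¹ with hBdef
  have hdet : IsUnit (1 - Δ).det := (Matrix.isUnit_iff_isUnit_det _).mp hU
  have hB1 : B * (1 - Δ) = 1 := Matrix.nonsing_inv_mul _ hdet
  set Γ : Matrix (Fin r) (Fin r) ℝ := B - 1 with hΓdef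
  have hBΓ : B = 1 + Γ := by rw [hΓdef]; abel
  have hΓeq : Γ = Δ + Γ * Δ := by
    have h3 : B - B * Δ = 1 := by rw [← hB1, mul_sub, mul_one]
    have h4 : B = 1 + B * Δ := sub_eq_iff_eq_add.mp h3
    have h2 : Γ = B * Δ := by rw [hΓdef]; nth_rewrite 1 [h4]; abel
    rw [h2]
    nth_rewrite 1 [hBΓ]
    rw [add_mul, one_mul, ← h2]
  -- norm bound on Γ
  have hΓnorm : ‖Γ‖ ≤ 1 / 3 := by
    have h1 : ‖Γ‖ ≤ ‖Δ‖ + ‖Γ‖ * ‖Δ‖ := by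
      calc ‖Γ‖ = ‖Δ + Γ * Δ‖ := by rw [← hΓeq]
        _ ≤ ‖Δ‖ + ‖Γ * Δ‖ := norm_add_le _ _
        _ ≤ ‖Δ‖ + ‖Γ‖ * ‖Δ‖ := by gcongr; exact norm_mul_le _ _
    have hΔ14 : ‖Δ‖ ≤ 1/4 := hΔnorm.trans (by rw [div_le_div_iff₀ hrpos (by norm_num)]; linarith)
    nlinarith [norm_nonneg Γ, norm_nonneg Δ]
  have hynorm : ‖y‖ ≤ 3 / 4 := by
    apply pi_norm_le_iff_of_nonneg (by norm_num) |>.mpr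
    intro i
    rcases hy i with h | h <;> rw [h, Real.norm_eq_abs] <;> rw [abs_of_nonneg (by norm_num)] <;> norm_num
  intro j
  have hx : B.mulVec y = y + Γ.mulVec y := by
    rw [hBΓ, Matrix.add_mulVec, Matrix.one_mulVec]
  have hbound : |(Γ.mulVec y) j| ≤ 1 / 4 := by
    calc |(Γ.mulVec y) j| = ‖(Γ.mulVec y) j‖ := rfl
      _ ≤ ‖Γ.mulVec y‖ := norm_le_pi_norm _ j
      _ ≤ ‖Γ‖ * ‖y‖ := Matrix.linfty_opNorm_mulVec _ _
      _ ≤ (1/3) * (3/4) := by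
          apply mul_le_mul hΓnorm hynorm (norm_nonneg _) (by norm_num)
      _ = 1 / 4 := by norm_num
  rw [hx]
  simp only [Pi.add_apply]
  rw [abs_le] at hbound
  rcases hy j with h | h <;> rw [h] <;> constructor <;> linarith [hbound.1, hbound.2]
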